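/- arXiv:1406.1480 — 3 statements merged into one kernel-verified Lean document; each statement's English description precedes it below -/
import Mathlib

section
/- Let μ be a finite Borel measure on ℝ^d and let f be a non-negative C^m function with compact support, where m = ⌈3d/2⌉. Define the measure ν by dν = f dμ. Then for all s ∈ [0, d], if |μ̂(ξ)| ≤ C|ξ|^{-s/2} for some constant C and all ξ ≠ 0, then there is a constant C' such that |ν̂(ξ)| ≤ C'|ξ|^{-s/2} for all ξ ≠ 0. -/
open MeasureTheory

noncomputable def FT {d : ℕ} (μ : Measure (EuclideanSpace ℝ (Fin d)))
    (ξ : EuclideanSpace ℝ (Fin d)) : ℂ :=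
  ∫ x, Complex.exp (-(2 * Real.pi * Complex.I * ((inner ℝ ξ x : ℝ) : ℂ))) ∂μ

open FourierTransform Real Complex Filter
open scoped NNReal ENNReal

section aux

variable {d : ℕ}
local notation "V" => EuclideanSpace ℝ (Fin d)

lemma FT_eq_fourierIntegral' (μ : Measure V) :
    FT μ = VectorFourier.fourierIntegral 𝐞 μ (innerₗ (EuclideanSpace ℝ (Fin d)))
      (fun _ => (1:ℂ)) := by
  ext ξ
  rw [FT, VectorFourier.fourierIntegral]
  congr 1; ext x
  rw [Circle.smul_def, Real.fourierChar_apply]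
  simp only [innerₗ_apply_apply, smul_eq_mul, mul_one]
  rw [real_inner_comm]
  push_cast
  ring_nf

lemma FT_continuous' (μ : Measure V) [IsFiniteMeasure μ] :
    Continuous (FT μ) := by
  rw [FT_eq_fourierIntegral']
  exact VectorFourier.fourierIntegral_continuous Real.continuous_fourierChar
    (by exact continuous_inner) (integrable_const 1)

lemma norm_exp_I_eq_one (r : ℝ) : ‖Complex.exp (-(2 * Real.pi * Complex.I * (r : ℂ)))‖ = 1 := by
  rw [Complex.norm_exp]; simp

lemma FT_norm_le' (μ : Measure V) [IsFiniteMeasure μ]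
    (ξ : V) : ‖FT μ ξ‖ ≤ (μ Set.univ).toReal := by
  rw [FT]
  have := norm_integral_le_of_norm_le_const (μ := μ) (C := 1)
    (f := fun x : V => Complex.exp (-(2 * Real.pi * Complex.I * ((inner ℝ ξ x : ℝ) : ℂ))))
    (Filter.Eventually.of_forall fun x => le_of_eq (norm_exp_I_eq_one _))
  simpa [Measure.real] using this

lemma tail_int (m : ℕ) (hm : d < m) {R : ℝ} (hR : 1 ≤ R) :
    IntegrableOn (fun η : V => ‖η‖ ^ (-(m:ℝ))) (Metric.closedBall 0 R)ᶜ := by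
  have hmr : (Module.finrank ℝ (EuclideanSpace ℝ (Fin d)) : ℝ) < (m:ℝ) := by
    rw [finrank_euclideanSpace_fin]; exact_mod_cast hm
  refine (((integrable_one_add_norm (E := V) hmr).const_mul ((2:ℝ)^(m:ℝ))).restrict
    ).mono' ?_ ?_
  · exact (Measurable.aestronglyMeasurable (by fun_prop)).restrict
  · rw [ae_restrict_iff' measurableSet_closedBall.compl]
    refine Filter.Eventually.of_forall fun η hη => ?_
    simp only [Set.mem_compl_iff, Metric.mem_closedBall, dist_zero_right, not_le] at hη
    have hη1 : (1:ℝ) ≤ ‖η‖ := hR.trans hη.le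
    have h0 : (0:ℝ) < ‖η‖ := lt_of_lt_of_le one_pos hη1
    rw [Real.norm_eq_abs, _root_.abs_of_nonneg (Real.rpow_nonneg (norm_nonneg _) _)]
    have h2 : (1 + ‖η‖) ≤ 2 * ‖η‖ := by linarith
    have key : (2*‖η‖) ^ (-(m:ℝ)) ≤ (1+‖η‖) ^ (-(m:ℝ)) :=
      Real.rpow_le_rpow_of_nonpos (by linarith) h2 (neg_nonpos.2 (Nat.cast_nonneg m))
    have hmul : (2*‖η‖) ^ (-(m:ℝ)) = 2 ^ (-(m:ℝ)) * ‖η‖ ^ (-(m:ℝ)) :=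
      Real.mul_rpow (by norm_num) (norm_nonneg _)
    have h22 : (2:ℝ) ^ (m:ℝ) * 2 ^ (-(m:ℝ)) = 1 := by
      rw [← Real.rpow_add (by norm_num)]; simp
    calc ‖η‖ ^ (-(m:ℝ)) = (2:ℝ)^(m:ℝ) * ((2*‖η‖) ^ (-(m:ℝ))) := by
          rw [hmul, ← mul_assoc, h22, one_mul]
      _ ≤ (2:ℝ)^(m:ℝ) * (1 + ‖η‖) ^ (-(m:ℝ)) := mul_le_mul_of_nonneg_left key (by positivity)

lemma tail_eq (m : ℕ) {R : ℝ} (hR : 0 < R) :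
    ∫ η in (Metric.closedBall (0:V) R)ᶜ, ‖η‖ ^ (-(m:ℝ)) =
      R ^ ((d:ℝ) - (m:ℝ)) * ∫ η in (Metric.closedBall (0:V) 1)ᶜ, ‖η‖ ^ (-(m:ℝ)) := by
  set ψ : V → ℝ := (Metric.closedBall (0:V) R)ᶜ.indicator (fun η => ‖η‖ ^ (-(m:ℝ))) with hψ
  set ψ1 : V → ℝ := (Metric.closedBall (0:V) 1)ᶜ.indicator (fun η => ‖η‖ ^ (-(m:ℝ))) with hψ1
  have hcomp : ∀ x : V, ψ (R • x) = R ^ (-(m:ℝ)) * ψ1 x := by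
    intro x
    rcases le_or_gt ‖x‖ 1 with hx | hx
    · have : R • x ∈ Metric.closedBall (0:V) R := by
        simp only [Metric.mem_closedBall, dist_zero_right, norm_smul, Real.norm_eq_abs,
          abs_of_pos hR]
        nlinarith
      simp [ψ, ψ1, Set.indicator_of_notMem, this, Metric.mem_closedBall, dist_zero_right, hx]
    · have h1 : R • x ∉ Metric.closedBall (0:V) R := by
        simp only [Metric.mem_closedBall, dist_zero_right, norm_smul, Real.norm_eq_abs,
          abs_of_pos hR, not_le]
        nlinarith
      have h2 : x ∉ Metric.closedBall (0:V) 1 := by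
        simp [Metric.mem_closedBall, dist_zero_right]; linarith
      rw [hψ, hψ1, Set.indicator_of_mem (by simpa using h1), Set.indicator_of_mem (by simpa using h2)]
      rw [norm_smul, Real.norm_eq_abs, abs_of_pos hR,
        Real.mul_rpow hR.le (norm_nonneg _)]
  have hs := MeasureTheory.Measure.integral_comp_smul (volume : Measure V) ψ R
  rw [finrank_euclideanSpace_fin] at hs
  have hint : ∫ x : V, ψ (R • x) = R ^ (-(m:ℝ)) * ∫ x : V, ψ1 x := by
    simp_rw [hcomp]; rw [integral_const_mul]
  rw [hint] at hs
  have habs : |((R ^ d)⁻¹ : ℝ)| = R ^ (-(d:ℝ)) := by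
    rw [abs_of_pos (by positivity), ← Real.rpow_natCast R d, ← Real.rpow_neg hR.le]
  rw [habs, smul_eq_mul] at hs
  have hmain : ∫ η, ψ η = R ^ ((d:ℝ)-(m:ℝ)) * ∫ x : V, ψ1 x := by
    have h1 : R ^ ((d:ℝ)) * (R ^ (-(d:ℝ)) * ∫ η, ψ η) = ∫ η, ψ η := by
      rw [← mul_assoc, ← Real.rpow_add hR]; simp
    rw [← h1, ← hs, ← mul_assoc, ← Real.rpow_add hR, sub_eq_add_neg]
  rw [hψ, hψ1] at hmain
  rw [← integral_indicator measurableSet_closedBall.compl,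
    ← integral_indicator measurableSet_closedBall.compl, hmain]

end aux

theorem stmt0 {d : ℕ} (μ : Measure (EuclideanSpace ℝ (Fin d))) [IsFiniteMeasure μ]
    (f : EuclideanSpace ℝ (Fin d) → ℝ) (hf0 : ∀ x, 0 ≤ f x)
    (hfc : HasCompactSupport f)
    (hfsm : ContDiff ℝ (Nat.ceil ((3 * d : ℝ) / 2) : ℕ) f)
    (ν : Measure (EuclideanSpace ℝ (Fin d)))
    (hν : ν = μ.withDensity (fun x => ENNReal.ofReal (f x)))
    (s : ℝ) (hs0 : 0 ≤ s) (hsd : s ≤ d)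
    (hμ : ∃ C : ℝ, ∀ ξ : EuclideanSpace ℝ (Fin d), ξ ≠ 0 →
      ‖FT μ ξ‖ ≤ C * ‖ξ‖ ^ (-s / 2)) :
    ∃ C' : ℝ, ∀ ξ : EuclideanSpace ℝ (Fin d), ξ ≠ 0 →
      ‖FT ν ξ‖ ≤ C' * ‖ξ‖ ^ (-s / 2) := by
  rcases Nat.eq_zero_or_pos d with hd0 | hd1
  · subst hd0
    exact ⟨0, fun ξ hξ => absurd (Subsingleton.elim ξ 0) hξ⟩
  -- setup
  set m : ℕ := Nat.ceil ((3 * d : ℝ) / 2) with hm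
  have hm32 : (3 * d : ℝ) / 2 ≤ m := Nat.le_ceil _
  have hdm : d < m := by
    have : (d : ℝ) < (3 * d : ℝ) / 2 := by
      have : (1:ℝ) ≤ d := by exact_mod_cast hd1
      linarith
    exact_mod_cast this.trans_le hm32
  have hmds : (d : ℝ) + s / 2 ≤ m := by linarith
  set fC : EuclideanSpace ℝ (Fin d) → ℂ := fun x => (f x : ℂ) with hfC
  have hfCc : HasCompactSupport fC := hfc.comp_left (g := fun r : ℝ => (r : ℂ)) (by simp)
  have hfCsm : ContDiff ℝ (m : ℕ∞) fC :=
    (Complex.ofRealCLM.contDiff (n := (m : ℕ∞))).comp hfsm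
  have hfCi : Integrable fC := hfCsm.continuous.integrable_of_hasCompactSupport hfCc
  set g : EuclideanSpace ℝ (Fin d) → ℂ := 𝓕 fC with hg
  have hgc : Continuous g :=
    VectorFourier.fourierIntegral_continuous Real.continuous_fourierChar
      (by exact continuous_inner) hfCi
  -- derivative integrability
  have hderiv : ∀ (k n : ℕ), (k:ℕ∞) ≤ 0 → (n:ℕ∞) ≤ (m:ℕ∞) →
      Integrable (fun v : EuclideanSpace ℝ (Fin d) =>
        ‖v‖ ^ k * ‖iteratedFDeriv ℝ n fC v‖) := by
    intro k n _ hnm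
    apply Continuous.integrable_of_hasCompactSupport
    · exact ((continuous_norm.pow k)).mul
        (hfCsm.continuous_iteratedFDeriv (by exact_mod_cast hnm)).norm
    · exact ((hfCc.iteratedFDeriv n).norm).mul_left
  -- decay of g at every order n ≤ m
  have hdecay : ∀ n : ℕ, n ≤ m → ∃ D : ℝ, 0 ≤ D ∧ ∀ w, ‖w‖ ^ n * ‖g w‖ ≤ D := by
    intro n hn
    refine ⟨(2 * π) ^ 0 * (2 * 0 + 2) ^ n *
      ∑ p ∈ Finset.range (0 + 1) ×ˢ Finset.range (n + 1),
        ∫ v, ‖v‖ ^ p.1 * ‖iteratedFDeriv ℝ p.2 fC v‖, ?_, ?_⟩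
    · have := Real.pow_mul_norm_iteratedFDeriv_fourier_le (K := 0) (N := (m:ℕ∞))
        hfCsm hderiv (le_refl (0:ℕ∞)) (by exact_mod_cast hn) (0 : EuclideanSpace ℝ (Fin d))
      refine le_trans ?_ (by simpa [norm_iteratedFDeriv_zero] using this)
      positivity
    · intro w
      have := Real.pow_mul_norm_iteratedFDeriv_fourier_le (K := 0) (N := (m:ℕ∞))
        hfCsm hderiv (le_refl (0:ℕ∞)) (by exact_mod_cast hn) w
      simpa [norm_iteratedFDeriv_zero] using this
  -- uniform polynomial decay bound
  set D : ℕ → ℝ := fun n => if h : n ≤ m then (hdecay n h).choose else 0 with hD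
  have hD0 : ∀ n, 0 ≤ D n := by
    intro n; rw [hD]; dsimp only
    split
    · exact (hdecay n (by assumption)).choose_spec.1
    · exact le_refl 0
  have hDval : ∀ (n : ℕ), n ≤ m → ∀ w, ‖w‖ ^ n * ‖g w‖ ≤ D n := by
    intro n h w
    rw [hD]; dsimp only; rw [dif_pos h]
    exact (hdecay n h).choose_spec.2 w
  set Cg : ℝ := ∑ j ∈ Finset.range (m + 1), (m.choose j : ℝ) * D j with hCg
  have hCg0 : 0 ≤ Cg := Finset.sum_nonneg fun j _ => mul_nonneg (by positivity) (hD0 j)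
  have hgpoly : ∀ w : EuclideanSpace ℝ (Fin d), (1 + ‖w‖) ^ m * ‖g w‖ ≤ Cg := by
    intro w
    have hpow : (‖w‖ + 1) ^ m = ∑ j ∈ Finset.range (m + 1),
        ‖w‖ ^ j * 1 ^ (m - j) * (m.choose j : ℝ) := add_pow ‖w‖ 1 m
    rw [add_comm (1:ℝ) ‖w‖, hpow, Finset.sum_mul]
    refine Finset.sum_le_sum fun j hj => ?_
    have hj' : j ≤ m := Nat.lt_succ_iff.mp (Finset.mem_range.mp hj)
    have := hDval j hj' w
    calc ‖w‖ ^ j * 1 ^ (m - j) * (m.choose j : ℝ) * ‖g w‖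
        = (m.choose j : ℝ) * (‖w‖ ^ j * ‖g w‖) := by ring
      _ ≤ (m.choose j : ℝ) * D j := by
          exact mul_le_mul_of_nonneg_left this (by positivity)
  have hgdecay : ∀ w : EuclideanSpace ℝ (Fin d), ‖g w‖ ≤ Cg * (1 + ‖w‖) ^ (-(m:ℝ)) := by
    intro w
    have hb : (0:ℝ) < (1 + ‖w‖) ^ m := by positivity
    have h1 : ‖g w‖ ≤ Cg / (1 + ‖w‖) ^ m := by
      rw [le_div_iff₀ hb]
      calc ‖g w‖ * (1 + ‖w‖) ^ m = (1 + ‖w‖) ^ m * ‖g w‖ := by ring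
        _ ≤ Cg := hgpoly w
    refine h1.trans (le_of_eq ?_)
    rw [Real.rpow_neg (by positivity), Real.rpow_natCast, div_eq_mul_inv]
  -- integrability of g
  have hmr : (Module.finrank ℝ (EuclideanSpace ℝ (Fin d)) : ℝ) < (m:ℝ) := by
    rw [finrank_euclideanSpace_fin]; exact_mod_cast hdm
  have hgi : Integrable g :=
    ((integrable_one_add_norm (E := EuclideanSpace ℝ (Fin d)) hmr).const_mul Cg).mono'
      hgc.aestronglyMeasurable (Filter.Eventually.of_forall hgdecay)
  -- Fourier inversion
  have hinv : ∀ x, fC x = 𝓕⁻ g x := by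
    intro x
    rw [hg, hfCsm.continuous.fourierInv_fourier_eq hfCi (hg ▸ hgi)]
  -- the key convolution identity
  have key : ∀ ξ : EuclideanSpace ℝ (Fin d),
      FT ν ξ = ∫ η, g η * FT μ (ξ - η) := by
    intro ξ
    have step1 : FT ν ξ = ∫ x, fC x *
        Complex.exp (-(2 * π * Complex.I * ((inner ℝ ξ x : ℝ) : ℂ))) ∂μ := by
      rw [hν, FT]
      have hmeas : Measurable fun x : EuclideanSpace ℝ (Fin d) => Real.toNNReal (f x) :=
        hfsm.continuous.measurable.real_toNNReal
      rw [show (fun x : EuclideanSpace ℝ (Fin d) => ENNReal.ofReal (f x))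
          = (fun x => ((Real.toNNReal (f x) : ℝ≥0) : ℝ≥0∞)) from rfl]
      rw [integral_withDensity_eq_integral_smul hmeas]
      congr 1; ext x
      rw [NNReal.smul_def, Real.coe_toNNReal _ (hf0 x), Complex.real_smul]
    have hexpmul : ∀ (η x : EuclideanSpace ℝ (Fin d)),
        Complex.exp (((2 * π * (inner ℝ η x : ℝ) : ℝ) : ℂ) * Complex.I) *
          Complex.exp (-(2 * π * Complex.I * ((inner ℝ ξ x : ℝ) : ℂ))) =
        Complex.exp (-(2 * π * Complex.I * ((inner ℝ (ξ - η) x : ℝ) : ℂ))) := by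
      intro η x
      rw [← Complex.exp_add]
      congr 1
      have hsub : (inner ℝ (ξ - η) x : ℝ) = (inner ℝ ξ x : ℝ) - (inner ℝ η x : ℝ) :=
        inner_sub_left _ _ _
      rw [hsub]
      push_cast
      ring
    have step2 : ∀ x, fC x * Complex.exp (-(2 * π * Complex.I * ((inner ℝ ξ x : ℝ) : ℂ)))
        = ∫ η, g η * Complex.exp (-(2 * π * Complex.I * ((inner ℝ (ξ - η) x : ℝ) : ℂ))) := by
      intro x
      rw [hinv x, Real.fourierInv_eq']
      rw [← integral_mul_const]
      congr 1; ext η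
      rw [smul_eq_mul]
      calc Complex.exp (((2 * π * (inner ℝ η x : ℝ) : ℝ) : ℂ) * Complex.I) * g η *
            Complex.exp (-(2 * π * Complex.I * ((inner ℝ ξ x : ℝ) : ℂ)))
          = g η * (Complex.exp (((2 * π * (inner ℝ η x : ℝ) : ℝ) : ℂ) * Complex.I) *
              Complex.exp (-(2 * π * Complex.I * ((inner ℝ ξ x : ℝ) : ℂ)))) := by ring
        _ = g η * Complex.exp (-(2 * π * Complex.I * ((inner ℝ (ξ - η) x : ℝ) : ℂ))) := by
              rw [hexpmul]
    have hFi : Integrable (Function.uncurry fun (x η : EuclideanSpace ℝ (Fin d)) =>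
        g η * Complex.exp (-(2 * π * Complex.I * ((inner ℝ (ξ - η) x : ℝ) : ℂ))))
        (μ.prod volume) := by
      constructor
      · refine Continuous.aestronglyMeasurable ?_
        refine Continuous.mul (hgc.comp continuous_snd) (Complex.continuous_exp.comp ?_)
        refine Continuous.neg (Continuous.mul continuous_const ?_)
        refine Complex.continuous_ofReal.comp ?_
        exact continuous_inner.comp ((continuous_const.sub continuous_snd).prodMk
          continuous_fst)
      · refine HasFiniteIntegral.mono' ((integrable_const (1:ℝ)).mul_prod hgi.norm).2 ?_
        refine Filter.Eventually.of_forall fun p => ?_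
        simp only [Function.uncurry]
        rw [norm_mul, norm_exp_I_eq_one, mul_one, one_mul]
    calc FT ν ξ = ∫ x, fC x *
          Complex.exp (-(2 * π * Complex.I * ((inner ℝ ξ x : ℝ) : ℂ))) ∂μ := step1
      _ = ∫ x, ∫ η, g η *
            Complex.exp (-(2 * π * Complex.I * ((inner ℝ (ξ - η) x : ℝ) : ℂ))) ∂volume ∂μ :=
          integral_congr_ae (Filter.Eventually.of_forall fun x => step2 x)
      _ = ∫ η, ∫ x, g η *
            Complex.exp (-(2 * π * Complex.I * ((inner ℝ (ξ - η) x : ℝ) : ℂ))) ∂μ ∂volume :=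
          integral_integral_swap hFi
      _ = ∫ η, g η * FT μ (ξ - η) := by
          refine integral_congr_ae (Filter.Eventually.of_forall fun η => ?_)
          show (∫ x, g η *
            Complex.exp (-(2 * π * Complex.I * ((inner ℝ (ξ - η) x : ℝ) : ℂ))) ∂μ)
              = g η * FT μ (ξ - η)
          rw [integral_const_mul]
          rfl
  -- constants
  obtain ⟨C, hC⟩ := hμ
  set C₀ : ℝ := |C| with hC₀
  have hC₀0 : 0 ≤ C₀ := abs_nonneg C
  have hC0 : ∀ ζ : EuclideanSpace ℝ (Fin d), ζ ≠ 0 → ‖FT μ ζ‖ ≤ C₀ * ‖ζ‖ ^ (-s / 2) := by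
    intro ζ hζ
    exact (hC ζ hζ).trans (mul_le_mul_of_nonneg_right (le_abs_self C)
      (Real.rpow_nonneg (norm_nonneg ζ) _))
  set Mb : ℝ := (μ Set.univ).toReal with hMbdef
  have hMb0 : 0 ≤ Mb := ENNReal.toReal_nonneg
  have hMb : ∀ ζ, ‖FT μ ζ‖ ≤ Mb := fun ζ => FT_norm_le' μ ζ
  set Ig : ℝ := ∫ η, ‖g η‖ with hIg
  have hIg0 : 0 ≤ Ig := integral_nonneg fun η => norm_nonneg _
  set T : ℝ := ∫ η in (Metric.closedBall (0:EuclideanSpace ℝ (Fin d)) 1)ᶜ, ‖η‖ ^ (-(m:ℝ))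
    with hT
  have hT0 : 0 ≤ T := setIntegral_nonneg measurableSet_closedBall.compl
    (fun η _ => Real.rpow_nonneg (norm_nonneg η) _)
  refine ⟨max (Ig * Mb * 2 ^ (s/2)) (Ig * C₀ * 2 ^ (s/2) + Mb * Cg * T * 2 ^ (s/2)), ?_⟩
  intro ξ hξ
  have hξn : 0 < ‖ξ‖ := norm_pos_iff.mpr hξ
  have hrp : 0 ≤ ‖ξ‖ ^ (-s / 2) := Real.rpow_nonneg (norm_nonneg ξ) _
  have hs2 : -s / 2 ≤ 0 := by linarith
  rcases le_or_gt ‖ξ‖ 2 with hsmall | hbig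
  · -- small frequencies
    have h1 : ‖FT ν ξ‖ ≤ Ig * Mb := by
      rw [key ξ]
      have hdom : Integrable (fun η : EuclideanSpace ℝ (Fin d) => ‖g η‖ * Mb) :=
        hgi.norm.mul_const Mb
      have hb := norm_integral_le_of_norm_le hdom (Filter.Eventually.of_forall fun η => by
        show ‖g η * FT μ (ξ - η)‖ ≤ ‖g η‖ * Mb
        rw [norm_mul]; exact mul_le_mul_of_nonneg_left (hMb _) (norm_nonneg _))
      calc ‖∫ η, g η * FT μ (ξ - η)‖ ≤ ∫ η, ‖g η‖ * Mb := hb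
        _ = Ig * Mb := by rw [integral_mul_const]
    have h2 : (1:ℝ) ≤ 2 ^ (s/2) * ‖ξ‖ ^ (-s/2) := by
      have hb : (2:ℝ) ^ (-s/2) ≤ ‖ξ‖ ^ (-s/2) :=
        Real.rpow_le_rpow_of_nonpos hξn hsmall hs2
      calc (1:ℝ) = 2 ^ (s/2) * 2 ^ (-s/2) := by
            rw [← Real.rpow_add (by norm_num)]; ring_nf; norm_num
        _ ≤ 2 ^ (s/2) * ‖ξ‖ ^ (-s/2) := mul_le_mul_of_nonneg_left hb (by positivity)
    calc ‖FT ν ξ‖ ≤ Ig * Mb := h1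
      _ = (Ig * Mb) * 1 := by ring
      _ ≤ (Ig * Mb) * (2 ^ (s/2) * ‖ξ‖ ^ (-s/2)) :=
          mul_le_mul_of_nonneg_left h2 (mul_nonneg hIg0 hMb0)
      _ = (Ig * Mb * 2 ^ (s/2)) * ‖ξ‖ ^ (-s/2) := by ring
      _ ≤ max (Ig * Mb * 2 ^ (s/2)) (Ig * C₀ * 2 ^ (s/2) + Mb * Cg * T * 2 ^ (s/2))
            * ‖ξ‖ ^ (-s/2) := mul_le_mul_of_nonneg_right (le_max_left _ _) hrp
  · -- large frequencies
    set R : ℝ := ‖ξ‖ / 2 with hRdef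
    have hR1 : 1 < R := by rw [hRdef]; linarith
    have hR0 : 0 < R := lt_trans one_pos hR1
    set E : Set (EuclideanSpace ℝ (Fin d)) := Metric.closedBall 0 R with hE
    have hEm : MeasurableSet E := measurableSet_closedBall
    have hh : Integrable (fun η => g η * FT μ (ξ - η)) := by
      refine (hgi.norm.mul_const Mb).mono' ?_ (Filter.Eventually.of_forall fun η => ?_)
      · exact (hgc.mul ((FT_continuous' μ).comp
          (continuous_const.sub continuous_id))).aestronglyMeasurable
      · rw [norm_mul]
        exact mul_le_mul_of_nonneg_left (hMb _) (norm_nonneg _)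
    have hB1 : ‖∫ η in E, g η * FT μ (ξ - η)‖ ≤ Ig * (C₀ * R ^ (-s/2)) := by
      have hdom : Integrable (fun η : EuclideanSpace ℝ (Fin d) => ‖g η‖ * (C₀ * R ^ (-s/2)))
          (volume.restrict E) := (hgi.norm.mul_const _).restrict
      have hb : ∀ᵐ η ∂(volume.restrict E),
          ‖g η * FT μ (ξ - η)‖ ≤ ‖g η‖ * (C₀ * R ^ (-s/2)) := by
        rw [ae_restrict_iff' hEm]
        refine Filter.Eventually.of_forall fun η hη => ?_
        have hηR : ‖η‖ ≤ R := by
          simpa [hE, Metric.mem_closedBall, dist_zero_right] using hη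
        have hξ2R : ‖ξ‖ = 2 * R := by rw [hRdef]; ring
        have hsub : R ≤ ‖ξ - η‖ := by
          have h5 := norm_sub_norm_le ξ η
          linarith
        have hne : ξ - η ≠ 0 := by
          refine norm_pos_iff.mp (lt_of_lt_of_le hR0 hsub)
        have h3 : ‖FT μ (ξ - η)‖ ≤ C₀ * ‖ξ - η‖ ^ (-s/2) := hC0 _ hne
        have h4 : ‖ξ - η‖ ^ (-s/2) ≤ R ^ (-s/2) :=
          Real.rpow_le_rpow_of_nonpos hR0 hsub hs2
        rw [norm_mul]
        calc ‖g η‖ * ‖FT μ (ξ - η)‖ ≤ ‖g η‖ * (C₀ * ‖ξ - η‖ ^ (-s/2)) :=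
              mul_le_mul_of_nonneg_left h3 (norm_nonneg _)
          _ ≤ ‖g η‖ * (C₀ * R ^ (-s/2)) := by
              exact mul_le_mul_of_nonneg_left
                (mul_le_mul_of_nonneg_left h4 hC₀0) (norm_nonneg _)
      calc ‖∫ η in E, g η * FT μ (ξ - η)‖ ≤ ∫ η in E, ‖g η‖ * (C₀ * R ^ (-s/2)) :=
            norm_integral_le_of_norm_le hdom hb
        _ = (∫ η in E, ‖g η‖) * (C₀ * R ^ (-s/2)) := by rw [integral_mul_const]
        _ ≤ Ig * (C₀ * R ^ (-s/2)) := by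
            refine mul_le_mul_of_nonneg_right ?_ (by positivity)
            exact setIntegral_le_integral hgi.norm
              (Filter.Eventually.of_forall fun _ => norm_nonneg _)
    have hB2 : ‖∫ η in Eᶜ, g η * FT μ (ξ - η)‖ ≤ Mb * (Cg * (R ^ ((d:ℝ) - (m:ℝ)) * T)) := by
      have hdom : Integrable (fun η : EuclideanSpace ℝ (Fin d) => ‖g η‖ * Mb)
          (volume.restrict Eᶜ) := (hgi.norm.mul_const _).restrict
      have h6 : ‖∫ η in Eᶜ, g η * FT μ (ξ - η)‖ ≤ ∫ η in Eᶜ, ‖g η‖ * Mb :=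
        norm_integral_le_of_norm_le hdom (Filter.Eventually.of_forall fun η => by
          show ‖g η * FT μ (ξ - η)‖ ≤ ‖g η‖ * Mb
          rw [norm_mul]; exact mul_le_mul_of_nonneg_left (hMb _) (norm_nonneg _))
      have h7 : ∫ η in Eᶜ, ‖g η‖ * Mb = Mb * ∫ η in Eᶜ, ‖g η‖ := by
        rw [integral_mul_const]; ring
      have h8 : (∫ η in Eᶜ, ‖g η‖) ≤ ∫ η in Eᶜ, Cg * ‖η‖ ^ (-(m:ℝ)) := by
        refine setIntegral_mono_on hgi.norm.integrableOn
          ((tail_int m hdm hR1.le).const_mul Cg) hEm.compl ?_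
        intro η hη
        simp only [hE, Set.mem_compl_iff, Metric.mem_closedBall, dist_zero_right, not_le] at hη
        have h9 : (0:ℝ) < ‖η‖ := lt_trans hR0 hη
        have h10 : (1 + ‖η‖) ^ (-(m:ℝ)) ≤ ‖η‖ ^ (-(m:ℝ)) :=
          Real.rpow_le_rpow_of_nonpos h9 (by linarith) (neg_nonpos.2 (Nat.cast_nonneg m))
        exact (hgdecay η).trans (mul_le_mul_of_nonneg_left h10 hCg0)
      have h11 : ∫ η in Eᶜ, Cg * ‖η‖ ^ (-(m:ℝ)) = Cg * (R ^ ((d:ℝ) - (m:ℝ)) * T) := by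
        rw [integral_const_mul, hE, tail_eq m hR0, hT]
      calc ‖∫ η in Eᶜ, g η * FT μ (ξ - η)‖ ≤ ∫ η in Eᶜ, ‖g η‖ * Mb := h6
        _ = Mb * ∫ η in Eᶜ, ‖g η‖ := h7
        _ ≤ Mb * (Cg * (R ^ ((d:ℝ) - (m:ℝ)) * T)) := by
            rw [← h11]
            exact mul_le_mul_of_nonneg_left h8 hMb0
    have hsplit : ‖FT ν ξ‖ ≤ Ig * (C₀ * R ^ (-s/2)) + Mb * (Cg * (R ^ ((d:ℝ) - (m:ℝ)) * T)) := by
      rw [key ξ, ← integral_add_compl hEm hh]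
      exact (norm_add_le _ _).trans (add_le_add hB1 hB2)
    have hRexp : R ^ ((d:ℝ) - (m:ℝ)) ≤ R ^ (-s/2) :=
      Real.rpow_le_rpow_of_exponent_le hR1.le (by linarith)
    have hRs : R ^ (-s/2) = 2 ^ (s/2) * ‖ξ‖ ^ (-s/2) := by
      rw [hRdef, neg_div, Real.rpow_neg (by positivity) (s/2),
        Real.rpow_neg (norm_nonneg ξ) (s/2),
        Real.div_rpow (norm_nonneg ξ) (by norm_num), inv_div, div_eq_mul_inv]
    calc ‖FT ν ξ‖ ≤ Ig * (C₀ * R ^ (-s/2)) + Mb * (Cg * (R ^ ((d:ℝ) - (m:ℝ)) * T)) := hsplit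
      _ ≤ Ig * (C₀ * R ^ (-s/2)) + Mb * (Cg * (R ^ (-s/2) * T)) := by
          refine add_le_add_right (mul_le_mul_of_nonneg_left
            (mul_le_mul_of_nonneg_left
              (mul_le_mul_of_nonneg_right hRexp hT0) hCg0) hMb0) _
      _ = (Ig * C₀ + Mb * Cg * T) * R ^ (-s/2) := by ring
      _ = (Ig * C₀ + Mb * Cg * T) * (2 ^ (s/2) * ‖ξ‖ ^ (-s/2)) := by rw [hRs]
      _ = (Ig * C₀ * 2 ^ (s/2) + Mb * Cg * T * 2 ^ (s/2)) * ‖ξ‖ ^ (-s/2) := by ring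
      _ ≤ max (Ig * Mb * 2 ^ (s/2)) (Ig * C₀ * 2 ^ (s/2) + Mb * Cg * T * 2 ^ (s/2))
            * ‖ξ‖ ^ (-s/2) := mul_le_mul_of_nonneg_right (le_max_right _ _) hrp
end

section
/- The modified Fourier dimension is countably stable: for any countable family {A_k} of Borel subsets of ℝ^d, dim_FM(⋃_k A_k) = sup_k dim_FM A_k. -/
open MeasureTheory

/-- Fourier dimension of a finite Borel measure on `ℝ^d`. -/
noncomputable def fDim {d : ℕ} (μ : Measure (EuclideanSpace ℝ (Fin d))) : ℝ :=
  sSup {s : ℝ | 0 ≤ s ∧ s ≤ d ∧ ∃ C : ℝ, ∀ ξ : EuclideanSpace ℝ (Fin d), ξ ≠ 0 →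
    ‖FT μ ξ‖ ≤ C * ‖ξ‖ ^ (-s / 2)}

/-- Fourier dimension of a Borel set. -/
noncomputable def fDimSet {d : ℕ} (A : Set (EuclideanSpace ℝ (Fin d))) : ℝ :=
  sSup {r : ℝ | ∃ μ : Measure (EuclideanSpace ℝ (Fin d)),
    IsProbabilityMeasure μ ∧ μ A = 1 ∧ r = fDim μ}

/-- Modified Fourier dimension of a Borel set. -/
noncomputable def fDimM {d : ℕ} (A : Set (EuclideanSpace ℝ (Fin d))) : ℝ :=
  sSup {r : ℝ | ∃ μ : Measure (EuclideanSpace ℝ (Fin d)),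
    IsProbabilityMeasure μ ∧ 0 < μ A ∧ r = fDim μ}

lemma FT_norm_le_one {d : ℕ} (μ : Measure (EuclideanSpace ℝ (Fin d)))
    [IsProbabilityMeasure μ] (ξ : EuclideanSpace ℝ (Fin d)) : ‖FT μ ξ‖ ≤ 1 := by
  have h : ∀ x : EuclideanSpace ℝ (Fin d),
      ‖Complex.exp (-(2 * Real.pi * Complex.I * ((inner ℝ ξ x : ℝ) : ℂ)))‖ = 1 := by
    intro x
    rw [Complex.norm_exp]
    norm_num [Complex.mul_re]
  calc ‖FT μ ξ‖ ≤ ∫ x, ‖Complex.exp (-(2 * Real.pi * Complex.I *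
        ((inner ℝ ξ x : ℝ) : ℂ)))‖ ∂μ := norm_integral_le_integral_norm _
    _ = ∫ _x, (1 : ℝ) ∂μ := by simp_rw [h]
    _ = 1 := by simp

lemma zero_mem_fDim_set {d : ℕ} (μ : Measure (EuclideanSpace ℝ (Fin d)))
    [IsProbabilityMeasure μ] :
    (0 : ℝ) ∈ {s : ℝ | 0 ≤ s ∧ s ≤ d ∧ ∃ C : ℝ, ∀ ξ : EuclideanSpace ℝ (Fin d), ξ ≠ 0 →
      ‖FT μ ξ‖ ≤ C * ‖ξ‖ ^ (-s / 2)} := by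
  refine ⟨le_refl 0, Nat.cast_nonneg d, 1, fun ξ hξ => ?_⟩
  have : ‖ξ‖ ^ (-(0:ℝ) / 2) = 1 := by norm_num
  rw [this, one_mul]
  exact FT_norm_le_one μ ξ

lemma fDim_nonneg {d : ℕ} (μ : Measure (EuclideanSpace ℝ (Fin d)))
    [IsProbabilityMeasure μ] : 0 ≤ fDim μ := by
  refine le_csSup ⟨(d : ℝ), fun x hx => hx.2.1⟩ (zero_mem_fDim_set μ)

lemma fDim_le {d : ℕ} (μ : Measure (EuclideanSpace ℝ (Fin d)))
    [IsProbabilityMeasure μ] : fDim μ ≤ d := by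
  exact csSup_le ⟨0, zero_mem_fDim_set μ⟩ (fun x hx => hx.2.1)

theorem stmt13 {d : ℕ} (A : ℕ → Set (EuclideanSpace ℝ (Fin d)))
    (hA : ∀ k, MeasurableSet (A k)) :
    fDimM (⋃ k, A k) = ⨆ k, fDimM (A k) := by
  set S : ℕ → Set ℝ := fun k => {r : ℝ | ∃ μ : Measure (EuclideanSpace ℝ (Fin d)),
    IsProbabilityMeasure μ ∧ 0 < μ (A k) ∧ r = fDim μ} with hS
  have hsub : ∀ k, S k ⊆ Set.Icc (0:ℝ) d := by
    rintro k r ⟨μ, hp, _, rfl⟩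
    exact ⟨fDim_nonneg μ, fDim_le μ⟩
  have hset : {r : ℝ | ∃ μ : Measure (EuclideanSpace ℝ (Fin d)),
      IsProbabilityMeasure μ ∧ 0 < μ (⋃ k, A k) ∧ r = fDim μ} = ⋃ k, S k := by
    ext r
    constructor
    · rintro ⟨μ, hp, hpos, rfl⟩
      have : ∃ k, 0 < μ (A k) := by
        by_contra h
        push_neg at h
        have h0 : ∀ k, μ (A k) = 0 := fun k => le_antisymm (h k) (zero_le)
        have : μ (⋃ k, A k) = 0 := by
          refine le_antisymm ?_ (zero_le)
          calc μ (⋃ k, A k) ≤ ∑' k, μ (A k) := measure_iUnion_le A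
            _ = 0 := by simp [h0]
        exact absurd this (ne_of_gt hpos)
      obtain ⟨k, hk⟩ := this
      exact Set.mem_iUnion.2 ⟨k, μ, hp, hk, rfl⟩
    · intro hr
      obtain ⟨k, μ, hp, hk, rfl⟩ := Set.mem_iUnion.1 hr
      exact ⟨μ, hp, lt_of_lt_of_le hk (measure_mono (Set.subset_iUnion A k)), rfl⟩
  have hUsub : (⋃ k, S k) ⊆ Set.Icc (0:ℝ) d :=
    Set.iUnion_subset hsub
  have hbddU : BddAbove (⋃ k, S k) := ⟨(d : ℝ), fun x hx => (hUsub hx).2⟩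
  have hSk_nonneg : ∀ k, 0 ≤ sSup (S k) := by
    intro k
    exact Real.sSup_nonneg (fun x hx => (hsub k hx).1)
  have hSk_le : ∀ k, sSup (S k) ≤ d := by
    intro k
    exact Real.sSup_le (fun x hx => (hsub k hx).2) (Nat.cast_nonneg d)
  have hiSup_nonneg : 0 ≤ ⨆ k, sSup (S k) := Real.iSup_nonneg hSk_nonneg
  have hbddR : BddAbove (Set.range fun k => sSup (S k)) :=
    ⟨(d : ℝ), by rintro x ⟨k, rfl⟩; exact hSk_le k⟩
  rw [fDimM, hset]
  show sSup (⋃ k, S k) = ⨆ k, sSup (S k)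
  apply le_antisymm
  · refine Real.sSup_le (fun x hx => ?_) hiSup_nonneg
    obtain ⟨k, hk⟩ := Set.mem_iUnion.1 hx
    exact le_trans (le_csSup ⟨(d:ℝ), fun y hy => (hsub k hy).2⟩ hk) (le_ciSup hbddR k)
  · refine Real.iSup_le (fun k => ?_) ?_
    · refine Real.sSup_le (fun x hx => ?_) ?_
      · exact le_csSup hbddU (Set.mem_iUnion.2 ⟨k, hx⟩)
      · exact Real.sSup_nonneg (fun x hx => (hUsub hx).1)
    · exact Real.sSup_nonneg (fun x hx => (hUsub hx).1)
end

section
/- For any finite Borel measure μ on ℝ^d, lim_{T→∞} (2T)^{-d} ∫_{[-T,T]^d} |μ̂(ξ)|² dξ = Σ_{x ∈ ℝ^d} μ({x})², where the sum is over the (countably many) atoms of μ. -/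
open MeasureTheory

open Real Filter

noncomputable def s1 (T a : ℝ) : ℝ := if a = 0 then 2*T else Real.sin (2*Real.pi*T*a)/(Real.pi*a)

lemma oneD (T a : ℝ) (hT : 0 < T) :
    ∫ t in Set.Icc (-T) T, Complex.exp (-(2*Real.pi*Complex.I*(t*a))) = (s1 T a : ℂ) := by
  by_cases ha : a = 0
  · subst ha
    simp only [Complex.ofReal_zero, mul_zero, neg_zero, Complex.exp_zero, s1, if_pos rfl]
    rw [setIntegral_const, Real.volume_real_Icc_of_le (by linarith : -T ≤ T), Complex.real_smul]
    push_cast; ring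
  · have hπ := Real.pi_ne_zero
    have key : (2*Real.pi*a : ℝ) ≠ 0 := by positivity
    have hc : (-(2*Real.pi*a) * Complex.I : ℂ) ≠ 0 := by
      refine mul_ne_zero ?_ Complex.I_ne_zero
      rw [neg_ne_zero, show ((2:ℂ)*Real.pi*a) = ((2*Real.pi*a : ℝ):ℂ) by push_cast; ring]
      exact_mod_cast key
    have h1 : ∀ t : ℝ, Complex.exp (-(2*Real.pi*Complex.I*(t*a)))
        = Complex.exp ((-(2*Real.pi*a) * Complex.I) * t) := by
      intro t; congr 1; push_cast; ring
    simp only [h1]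
    rw [MeasureTheory.integral_Icc_eq_integral_Ioc,
      ← intervalIntegral.integral_of_le (by linarith : -T ≤ T),
      integral_exp_mul_complex hc]
    have e1 : (-(2*Real.pi*a) * Complex.I) * (T:ℂ) = ((-(2*Real.pi*a*T) : ℝ) : ℂ) * Complex.I := by
      push_cast; ring
    have e2 : (-(2*Real.pi*a) * Complex.I) * ((-T:ℝ):ℂ) = (((2*Real.pi*a*T) : ℝ) : ℂ) * Complex.I := by
      push_cast; ring
    rw [e1, e2, Complex.exp_mul_I, Complex.exp_mul_I]
    simp only [← Complex.ofReal_sin, ← Complex.ofReal_cos, Real.cos_neg, Real.sin_neg, s1,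
      if_neg ha]
    rw [div_eq_iff hc]
    have : Real.sin (2*Real.pi*T*a) = Real.sin (2*Real.pi*a*T) := by ring_nf
    rw [this]
    have hπa : (Real.pi * a : ℝ) ≠ 0 := mul_ne_zero hπ ha
    have hπc : (Real.pi:ℂ) ≠ 0 := by exact_mod_cast hπ
    have hac : (a:ℂ) ≠ 0 := by exact_mod_cast ha
    push_cast
    field_simp
    ring

lemma boxInt {d : ℕ} (T : ℝ) (hT : 0 < T) (z : EuclideanSpace ℝ (Fin d)) :
    ∫ ξ in {ξ : EuclideanSpace ℝ (Fin d) | ∀ i, |ξ i| ≤ T},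
      Complex.exp (-(2*Real.pi*Complex.I*((inner ℝ ξ z : ℝ) : ℂ)))
      = ∏ i, (s1 T (z i) : ℂ) := by
  classical
  set e := (MeasurableEquiv.toLp 2 (Fin d → ℝ)).symm
  have hmp : MeasurePreserving (e.symm) volume volume :=
    (EuclideanSpace.volume_preserving_symm_measurableEquiv_toLp (Fin d)).symm
  have hemb : MeasurableEmbedding (e.symm : (Fin d → ℝ) → EuclideanSpace ℝ (Fin d)) :=
    e.symm.measurableEmbedding
  have hpre : (e.symm) ⁻¹' {ξ : EuclideanSpace ℝ (Fin d) | ∀ i, |ξ i| ≤ T}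
      = Set.univ.pi (fun _ : Fin d => Set.Icc (-T) T) := by
    ext y
    have hc : ∀ i, (e.symm y) i = y i := fun i => rfl
    simp only [Set.mem_preimage, Set.mem_setOf_eq, Set.mem_pi, Set.mem_univ, Set.mem_Icc,
      true_implies, hc, abs_le]
  rw [← hmp.setIntegral_preimage_emb hemb, hpre]
  have hfun : ∀ y : Fin d → ℝ,
      Complex.exp (-(2*Real.pi*Complex.I*((inner ℝ (e.symm y) z : ℝ) : ℂ)))
      = ∏ i, Complex.exp (-(2*Real.pi*Complex.I*((y i : ℂ) * (z i : ℂ)))) := by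
    intro y
    rw [← Complex.exp_sum]
    congr 1
    have : (inner ℝ (e.symm y) z : ℝ) = ∑ i, y i * z i := by
      simp [PiLp.inner_apply, RCLike.inner_apply, conj_trivial, e]
      exact Finset.sum_congr rfl fun i _ => mul_comm _ _
    rw [this]
    push_cast
    rw [Finset.mul_sum, neg_eq_iff_eq_neg, ← Finset.sum_neg_distrib]
    simp
  simp only [hfun]
  rw [← MeasureTheory.integral_indicator (MeasurableSet.univ_pi fun _ => measurableSet_Icc)]
  have hind : ∀ y : Fin d → ℝ,
      (Set.univ.pi (fun _ : Fin d => Set.Icc (-T) T)).indicator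
        (fun y => ∏ i, Complex.exp (-(2*Real.pi*Complex.I*((y i : ℂ) * (z i : ℂ))))) y
      = ∏ i, (Set.Icc (-T) T).indicator
          (fun t => Complex.exp (-(2*Real.pi*Complex.I*((t : ℂ) * (z i : ℂ))))) (y i) := by
    intro y
    by_cases hy : y ∈ Set.univ.pi (fun _ : Fin d => Set.Icc (-T) T)
    · rw [Set.indicator_of_mem hy]
      exact Finset.prod_congr rfl fun i _ =>
        (Set.indicator_of_mem (hy i (Set.mem_univ i))
          (fun t : ℝ => Complex.exp (-(2*Real.pi*Complex.I*((t : ℂ) * (z i : ℂ)))))).symm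
    · rw [Set.indicator_of_notMem hy]
      simp only [Set.mem_pi, Set.mem_univ, true_implies, not_forall] at hy
      obtain ⟨i, hi⟩ := hy
      exact (Finset.prod_eq_zero (Finset.mem_univ i)
        (by rw [Set.indicator_of_notMem hi])).symm
  simp only [hind]
  rw [volume_pi, MeasureTheory.integral_fintype_prod_eq_prod (ι := Fin d)
    (f := fun i t => (Set.Icc (-T) T).indicator
      (fun t : ℝ => Complex.exp (-(2*Real.pi*Complex.I*((t : ℂ) * (z i : ℂ))))) t)]
  refine Finset.prod_congr rfl fun i _ => ?_
  rw [MeasureTheory.integral_indicator measurableSet_Icc]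
  exact_mod_cast oneD T (z i) hT

lemma s1_meas (T : ℝ) : Measurable (s1 T) := by
  unfold s1
  refine Measurable.ite ?_ measurable_const ?_
  · rw [Set.setOf_eq_eq_singleton]
    exact measurableSet_singleton 0
  · exact (Real.measurable_sin.comp (measurable_const_mul _)).div (measurable_const_mul _)

lemma kbound {T a : ℝ} (hT : 0 < T) : |s1 T a / (2*T)| ≤ 1 := by
  unfold s1
  by_cases ha : a = 0
  · rw [if_pos ha, div_self (by linarith), abs_one]
  · rw [if_neg ha, div_div, abs_div, div_le_one (by positivity)]
    calc |Real.sin (2*Real.pi*T*a)| ≤ |2*Real.pi*T*a| := Real.abs_sin_le_abs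
      _ ≤ |Real.pi*a*(2*T)| := le_of_eq (by congr 1; ring)

lemma ktend (a : ℝ) : Tendsto (fun T => s1 T a / (2*T)) atTop (nhds (if a = 0 then 1 else 0)) := by
  by_cases ha : a = 0
  · rw [if_pos ha]
    have h : ∀ᶠ T in atTop, (1:ℝ) = s1 T a / (2*T) := by
      filter_upwards [eventually_gt_atTop 0] with T hT
      rw [ha]; unfold s1; rw [if_pos rfl, div_self (by linarith)]
    exact Tendsto.congr' h tendsto_const_nhds
  · rw [if_neg ha]
    have hπa : (0:ℝ) < 2*Real.pi*|a| := by
      have := abs_pos.mpr ha; positivity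
    apply squeeze_zero_norm' (a := fun T : ℝ => (2*Real.pi*|a|)⁻¹ * T⁻¹)
    · filter_upwards [eventually_gt_atTop 0] with T hT
      unfold s1
      rw [if_neg ha, div_div, Real.norm_eq_abs, abs_div]
      have h2 : |Real.pi*a*(2*T)| = 2*Real.pi*|a| * T := by
        rw [abs_mul, abs_mul, abs_of_pos Real.pi_pos, abs_of_pos (by linarith : (0:ℝ) < 2*T)]
        ring
      rw [h2, div_le_iff₀ (by positivity)]
      calc |Real.sin (2*Real.pi*T*a)| ≤ 1 := Real.abs_sin_le_one _
        _ = (2*Real.pi*|a|)⁻¹ * T⁻¹ * (2*Real.pi*|a| * T) := by field_simp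
    · rw [show (0:ℝ) = (2*Real.pi*|a|)⁻¹ * 0 by ring]
      exact tendsto_inv_atTop_zero.const_mul _

variable {d : ℕ} (μ : Measure (EuclideanSpace ℝ (Fin d))) [IsFiniteMeasure μ]

lemma expCont : Continuous (fun q : EuclideanSpace ℝ (Fin d) × (EuclideanSpace ℝ (Fin d) × EuclideanSpace ℝ (Fin d)) =>
    Complex.exp (-(2*Real.pi*Complex.I*((inner ℝ q.1 (q.2.1 - q.2.2) : ℝ) : ℂ)))) := by
  refine Complex.continuous_exp.comp (Continuous.neg ?_)
  refine (continuous_const.mul ?_)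
  refine Complex.continuous_ofReal.comp ?_
  exact Continuous.inner continuous_fst
    ((continuous_fst.comp continuous_snd).sub (continuous_snd.comp continuous_snd))

lemma expNorm (ξ z : EuclideanSpace ℝ (Fin d)) :
    ‖Complex.exp (-(2*Real.pi*Complex.I*((inner ℝ ξ z : ℝ) : ℂ)))‖ = 1 := by
  rw [show (-(2*Real.pi*Complex.I*((inner ℝ ξ z : ℝ) : ℂ))) = ((-(2*Real.pi*(inner ℝ ξ z : ℝ)) : ℝ) : ℂ) * Complex.I by push_cast; ring]
  exact Complex.norm_exp_ofReal_mul_I _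

lemma normFT_sq (ξ : EuclideanSpace ℝ (Fin d)) :
    (‖FT μ ξ‖ ^ 2 : ℝ)
    = (∫ p, Complex.exp (-(2*Real.pi*Complex.I*((inner ℝ ξ (p.1 - p.2) : ℝ) : ℂ))) ∂(μ.prod μ)).re := by
  have h1 : (starRingEnd ℂ) (FT μ ξ) = ∫ y, Complex.exp (2*Real.pi*Complex.I*((inner ℝ ξ y : ℝ) : ℂ)) ∂μ := by
    rw [FT, ← integral_conj]
    congr 1; ext y
    rw [← Complex.exp_conj]
    congr 1
    simp only [map_neg, map_mul, Complex.conj_I, Complex.conj_ofReal, map_ofNat]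
    ring
  have h2 : FT μ ξ * (starRingEnd ℂ) (FT μ ξ)
      = ∫ p, Complex.exp (-(2*Real.pi*Complex.I*((inner ℝ ξ (p.1 - p.2) : ℝ) : ℂ))) ∂(μ.prod μ) := by
    rw [h1, FT, ← integral_prod_mul]
    congr 1; ext p
    rw [← Complex.exp_add]
    congr 1
    rw [inner_sub_right]
    push_cast
    ring
  have h3 : (FT μ ξ * (starRingEnd ℂ) (FT μ ξ)).re = ‖FT μ ξ‖ ^ 2 := by
    rw [Complex.mul_conj]
    rw [Complex.normSq_eq_norm_sq, Complex.ofReal_re]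
  rw [← h3, h2]

lemma boxMeas (T : ℝ) : MeasurableSet {ξ : EuclideanSpace ℝ (Fin d) | ∀ i, |ξ i| ≤ T} := by
  have : {ξ : EuclideanSpace ℝ (Fin d) | ∀ i, |ξ i| ≤ T}
      = ⋂ i, (fun ξ : EuclideanSpace ℝ (Fin d) => ξ i) ⁻¹' Set.Icc (-T) T := by
    ext ξ; simp [abs_le]
  rw [this]
  exact MeasurableSet.iInter fun i =>
    (measurableSet_Icc).preimage (EuclideanSpace.proj i).continuous.measurable

lemma boxFin (T : ℝ) : volume {ξ : EuclideanSpace ℝ (Fin d) | ∀ i, |ξ i| ≤ T} < ⊤ := by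
  have hmp := (EuclideanSpace.volume_preserving_symm_measurableEquiv_toLp (Fin d)).symm
  rw [← hmp.measure_preimage (boxMeas T).nullMeasurableSet]
  have hpre : (MeasurableEquiv.toLp 2 (Fin d → ℝ)).symm.symm ⁻¹'
        {ξ : EuclideanSpace ℝ (Fin d) | ∀ i, |ξ i| ≤ T}
      = Set.univ.pi (fun _ : Fin d => Set.Icc (-T) T) := by
    ext y
    have hc : ∀ i, ((MeasurableEquiv.toLp 2 (Fin d → ℝ)).symm.symm y) i = y i := fun i => rfl
    simp only [Set.mem_preimage, Set.mem_setOf_eq, Set.mem_pi, Set.mem_univ, Set.mem_Icc,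
      true_implies, hc, abs_le]
  rw [hpre, volume_pi_pi]
  simp [Real.volume_Icc]

lemma keyT (T : ℝ) (hT : 0 < T) :
    (1 / (2 * T) ^ d) * ∫ ξ in {ξ : EuclideanSpace ℝ (Fin d) | ∀ i, |ξ i| ≤ T}, ‖FT μ ξ‖ ^ 2
    = ∫ p : EuclideanSpace ℝ (Fin d) × EuclideanSpace ℝ (Fin d),
        ∏ i, (s1 T ((p.1 - p.2) i) / (2*T)) ∂(μ.prod μ) := by
  set B := {ξ : EuclideanSpace ℝ (Fin d) | ∀ i, |ξ i| ≤ T} with hB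
  haveI : IsFiniteMeasure (volume.restrict B) :=
    ⟨by rw [Measure.restrict_apply_univ]; exact boxFin T⟩
  set E : EuclideanSpace ℝ (Fin d) → EuclideanSpace ℝ (Fin d) × EuclideanSpace ℝ (Fin d) → ℂ :=
    fun ξ p => Complex.exp (-(2*Real.pi*Complex.I*((inner ℝ ξ (p.1 - p.2) : ℝ) : ℂ))) with hE
  have hInt : Integrable (Function.uncurry E) ((volume.restrict B).prod (μ.prod μ)) := by
    refine Integrable.mono' (integrable_const 1) expCont.aestronglyMeasurable ?_
    filter_upwards with q
    rw [Function.uncurry, hE]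
    exact le_of_eq (expNorm _ _)
  have h1 : ∫ ξ in B, ‖FT μ ξ‖ ^ 2 = (∫ p, ∫ ξ in B, E ξ p ∂volume ∂(μ.prod μ)).re := by
    rw [← integral_integral_swap hInt]
    have hI2 : Integrable (fun ξ => ∫ p, E ξ p ∂(μ.prod μ)) (volume.restrict B) :=
      hInt.integral_prod_left
    have hre := integral_re (μ := volume.restrict B)
      (f := fun ξ => ∫ p, E ξ p ∂(μ.prod μ)) hI2
    simp only [RCLike.re_to_complex] at hre
    rw [← hre]
    exact integral_congr_ae (Filter.Eventually.of_forall fun ξ => normFT_sq μ ξ)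
  have h2 : ∀ p : EuclideanSpace ℝ (Fin d) × EuclideanSpace ℝ (Fin d),
      ∫ ξ in B, E ξ p ∂volume = ((∏ i, s1 T ((p.1 - p.2) i) : ℝ) : ℂ) := by
    intro p
    rw [hE, hB]
    rw [boxInt T hT (p.1 - p.2)]
    push_cast
    rfl
  have h3 : (∫ p, ∫ ξ in B, E ξ p ∂volume ∂(μ.prod μ)).re
      = ∫ p, (∏ i, s1 T ((p.1 - p.2) i)) ∂(μ.prod μ) := by
    have hI3 : Integrable (fun p => ∫ ξ in B, E ξ p ∂volume) (μ.prod μ) :=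
      hInt.integral_prod_right
    have hre := integral_re (μ := μ.prod μ)
      (f := fun p => ∫ ξ in B, E ξ p ∂volume) hI3
    simp only [RCLike.re_to_complex] at hre
    rw [← hre]
    refine integral_congr_ae (Filter.Eventually.of_forall fun p => ?_)
    show (∫ ξ in B, E ξ p ∂volume).re = ∏ i, s1 T ((p.1 - p.2) i)
    rw [h2 p, Complex.ofReal_re]
  rw [h1, h3, ← integral_const_mul]
  refine integral_congr_ae (Filter.Eventually.of_forall fun p => ?_)
  show 1 / (2*T) ^ d * ∏ i, s1 T ((p.1 - p.2) i) = ∏ i, s1 T ((p.1 - p.2) i) / (2*T)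
  rw [Finset.prod_div_distrib, Finset.prod_const, Finset.card_univ, Fintype.card_fin]
  field_simp

lemma diagMeas : MeasurableSet (Set.diagonal (EuclideanSpace ℝ (Fin d))) :=
  isClosed_diagonal.measurableSet

lemma diagSum : ((μ.prod μ) (Set.diagonal (EuclideanSpace ℝ (Fin d)))).toReal
    = ∑' x : EuclideanSpace ℝ (Fin d), (μ {x}).toReal ^ 2 := by
  have h1 : (μ.prod μ) (Set.diagonal (EuclideanSpace ℝ (Fin d))) = ∫⁻ x, μ {x} ∂μ := by
    rw [Measure.prod_apply (diagMeas)]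
    congr 1; ext x
    congr 1
    ext y
    simp [Set.diagonal, eq_comm]
  set A : Set (EuclideanSpace ℝ (Fin d)) := {x | 0 < μ {x}} with hA
  have hAc : A.Countable :=
    Measure.countable_meas_pos_of_disjoint_iUnion
      (As := fun x : EuclideanSpace ℝ (Fin d) => {x})
      (fun x => measurableSet_singleton x)
      (fun x y hxy => by simp [Function.onFun, Set.disjoint_singleton, hxy])
  have h2 : ∫⁻ x, μ {x} ∂μ = ∑' a : A, μ {(a : EuclideanSpace ℝ (Fin d))} * μ {(a : EuclideanSpace ℝ (Fin d))} := by
    rw [← lintegral_add_compl (fun x => μ {x}) hAc.measurableSet.compl]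
    have hz : ∫⁻ x in Aᶜᶜ, μ {x} ∂μ = ∫⁻ x in A, μ {x} ∂μ := by rw [compl_compl]
    have hz2 : ∫⁻ x in Aᶜ, μ {x} ∂μ = 0 := by
      rw [setLIntegral_congr_fun hAc.measurableSet.compl
        (fun x hx => ?_), lintegral_zero]
      simpa [hA, pos_iff_ne_zero, not_not] using hx
    rw [hz2, hz, lintegral_countable _ hAc]
    simp
  rw [h1, h2]
  have h3 : (∑' a : A, μ {(a : EuclideanSpace ℝ (Fin d))} * μ {(a : EuclideanSpace ℝ (Fin d))}).toReal
      = ∑' a : A, (μ {(a : EuclideanSpace ℝ (Fin d))}).toReal ^ 2 := by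
    rw [ENNReal.tsum_toReal_eq (fun a => ENNReal.mul_ne_top (measure_ne_top μ _) (measure_ne_top μ _))]
    congr 1; ext a
    rw [ENNReal.toReal_mul, sq]
  rw [h3]
  have hsupp : Function.support (fun x : EuclideanSpace ℝ (Fin d) => (μ {x}).toReal ^ 2) ⊆ A := by
    intro x hx
    simp only [Function.mem_support, ne_eq] at hx
    have hne : μ {x} ≠ 0 := fun h => hx (by simp [h])
    exact pos_iff_ne_zero.mpr hne
  exact tsum_subtype_eq_of_support_subset hsupp

lemma mainLimit : Tendsto
    (fun T : ℝ => ∫ p : EuclideanSpace ℝ (Fin d) × EuclideanSpace ℝ (Fin d),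
      ∏ i, (s1 T ((p.1 - p.2) i) / (2*T)) ∂(μ.prod μ))
    atTop
    (nhds (∑' x : EuclideanSpace ℝ (Fin d), (μ {x}).toReal ^ 2)) := by
  have hlim : ∀ p : EuclideanSpace ℝ (Fin d) × EuclideanSpace ℝ (Fin d),
      Tendsto (fun T : ℝ => ∏ i, (s1 T ((p.1 - p.2) i) / (2*T))) atTop
        (nhds ((Set.diagonal (EuclideanSpace ℝ (Fin d))).indicator 1 p)) := by
    intro p
    have h := tendsto_finset_prod (Finset.univ : Finset (Fin d))
      (fun i _ => ktend ((p.1 - p.2) i))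
    have he : (∏ i, if (p.1 - p.2) i = 0 then (1:ℝ) else 0)
        = (Set.diagonal (EuclideanSpace ℝ (Fin d))).indicator 1 p := by
      by_cases hp : p.1 = p.2
      · have hmem : p ∈ Set.diagonal (EuclideanSpace ℝ (Fin d)) := hp
        rw [Set.indicator_of_mem hmem]
        rw [Finset.prod_eq_one]
        · rfl
        intro i _
        rw [if_pos (by rw [hp]; simp)]
      · have hmem : p ∉ Set.diagonal (EuclideanSpace ℝ (Fin d)) := hp
        rw [Set.indicator_of_notMem hmem]
        have : p.1 - p.2 ≠ 0 := sub_ne_zero.mpr hp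
        obtain ⟨i, hi⟩ : ∃ i, (p.1 - p.2) i ≠ 0 := by
          by_contra hc
          push_neg at hc
          exact this (by ext i; exact hc i)
        exact Finset.prod_eq_zero (Finset.mem_univ i) (if_neg hi)
    rw [← he]
    exact h
  have := tendsto_integral_filter_of_dominated_convergence
    (μ := μ.prod μ)
    (F := fun T : ℝ => fun p : EuclideanSpace ℝ (Fin d) × EuclideanSpace ℝ (Fin d) =>
      ∏ i, (s1 T ((p.1 - p.2) i) / (2*T)))
    (f := (Set.diagonal (EuclideanSpace ℝ (Fin d))).indicator 1)
    (bound := fun _ => 1)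
    ?_ ?_ (integrable_const 1) (Filter.Eventually.of_forall hlim)
  · have hid : ∫ p, (Set.diagonal (EuclideanSpace ℝ (Fin d))).indicator 1 p ∂(μ.prod μ)
        = ((μ.prod μ) (Set.diagonal (EuclideanSpace ℝ (Fin d)))).toReal :=
      integral_indicator_one diagMeas
    rw [hid, diagSum] at this
    exact this
  · filter_upwards with T
    apply Measurable.aestronglyMeasurable
    apply Finset.measurable_prod
    intro i _
    refine Measurable.div ?_ measurable_const
    refine (s1_meas T).comp ?_
    exact Continuous.measurable (by
      have : Continuous (fun p : EuclideanSpace ℝ (Fin d) × EuclideanSpace ℝ (Fin d) => p.1 - p.2) :=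
        continuous_fst.sub continuous_snd
      exact (EuclideanSpace.proj i).continuous.comp this)
  · filter_upwards [eventually_gt_atTop 0] with T hT
    refine Filter.Eventually.of_forall fun p => ?_
    rw [Real.norm_eq_abs, Finset.abs_prod]
    calc ∏ i, |s1 T ((p.1 - p.2) i) / (2*T)| ≤ ∏ i, (1:ℝ) :=
          Finset.prod_le_prod (fun i _ => abs_nonneg _) (fun i _ => kbound hT)
      _ = 1 := Finset.prod_const_one

theorem stmt16 {d : ℕ} (μ : Measure (EuclideanSpace ℝ (Fin d))) [IsFiniteMeasure μ] :
    Filter.Tendsto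
      (fun T : ℝ => (1 / (2 * T) ^ d) *
        ∫ ξ in {ξ : EuclideanSpace ℝ (Fin d) | ∀ i, |ξ i| ≤ T}, ‖FT μ ξ‖ ^ 2)
      Filter.atTop
      (nhds (∑' x : EuclideanSpace ℝ (Fin d), (μ {x}).toReal ^ 2)) := by
  refine (mainLimit μ).congr' ?_
  filter_upwards [eventually_gt_atTop 0] with T hT
  exact (keyT μ T hT).symm
end
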